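/- The collection of UPGMA cones P(C) for maximal chains C in Π_4 is not a fan: the cones P(C_1) and P(C_2), for C_1 = 1|2|3|4 ⋖ 3|4|12 ⋖ 4|123 ⋖ 1234 and C_2 = 1|2|3|4 ⋖ 2|4|13 ⋖ 4|123 ⋖ 1234, intersect in a cone having (0,0,0,1,1,1) as an extreme ray, but (0,0,0,1,1,1) is not an extreme ray of P(C_1) or of P(C_2); hence P(C_1) ∩ P(C_2) is not a common face. -/

import Mathlib

/-- `v` spans an extreme ray of the cone `P`. -/
def IsExtremeRay {α : Type*} (P : Set (α → ℝ)) (v : α → ℝ) : Prop :=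
  v ∈ P ∧ v ≠ 0 ∧ ∀ x ∈ P, ∀ y ∈ P, x + y = v →
    (∃ a : ℝ, 0 ≤ a ∧ x = a • v) ∧ (∃ b : ℝ, 0 ≤ b ∧ y = b • v)

/-- Coordinates on `ℝ^6` are ordered `d₁₂,d₁₃,d₁₄,d₂₃,d₂₄,d₃₄` (indices `0,…,5`).
The UPGMA cone of the chain `C₁ = 1|2|3|4 ⋖ 3|4|12 ⋖ 4|123 ⋖ 1234`:
first merge `{1,2}` (so `d₁₂` minimal), then merge `{3}` with `{1,2}` among `12|3|4`. -/
def upgmaConeC1 : Set (Fin 6 → ℝ) :=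
  {d | (∀ i, 0 ≤ d i) ∧
    d 0 ≤ d 1 ∧ d 0 ≤ d 2 ∧ d 0 ≤ d 3 ∧ d 0 ≤ d 4 ∧ d 0 ≤ d 5 ∧
    (d 1 + d 3) / 2 ≤ (d 2 + d 4) / 2 ∧ (d 1 + d 3) / 2 ≤ d 5}

/-- The UPGMA cone of the chain `C₂ = 1|2|3|4 ⋖ 2|4|13 ⋖ 4|123 ⋖ 1234`:
first merge `{1,3}` (so `d₁₃` minimal), then merge `{2}` with `{1,3}` among `13|2|4`. -/
def upgmaConeC2 : Set (Fin 6 → ℝ) :=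
  {d | (∀ i, 0 ≤ d i) ∧
    d 1 ≤ d 0 ∧ d 1 ≤ d 2 ∧ d 1 ≤ d 3 ∧ d 1 ≤ d 4 ∧ d 1 ≤ d 5 ∧
    (d 0 + d 3) / 2 ≤ (d 2 + d 5) / 2 ∧ (d 0 + d 3) / 2 ≤ d 4}

private lemma ev2 (a b c d e f : ℝ) : ![a,b,c,d,e,f] 2 = c := rfl
private lemma ev3 (a b c d e f : ℝ) : ![a,b,c,d,e,f] 3 = d := rfl
private lemma ev4 (a b c d e f : ℝ) : ![a,b,c,d,e,f] 4 = e := rfl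
private lemma ev5 (a b c d e f : ℝ) : ![a,b,c,d,e,f] 5 = f := rfl

private lemma eqsmul (x : Fin 6 → ℝ) (h0 : x 0 = 0) (h1 : x 1 = 0) (h2 : x 2 = 0)
    (h4 : x 4 = x 3) (h5 : x 5 = x 3) :
    x = x 3 • (![0, 0, 0, 1, 1, 1] : Fin 6 → ℝ) := by
  funext i
  fin_cases i
  · show x 0 = x 3 * 0; rw [mul_zero]; exact h0
  · show x 1 = x 3 * 0; rw [mul_zero]; exact h1
  · show x 2 = x 3 * 0; rw [mul_zero]; exact h2
  · show x 3 = x 3 * 1; rw [mul_one]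
  · show x 4 = x 3 * 1; rw [mul_one]; exact h4
  · show x 5 = x 3 * 1; rw [mul_one]; exact h5

private lemma vv0 : (![0, 0, 0, 1, 1, 1] : Fin 6 → ℝ) 0 = 0 := rfl
private lemma vv1 : (![0, 0, 0, 1, 1, 1] : Fin 6 → ℝ) 1 = 0 := rfl
private lemma vv2 : (![0, 0, 0, 1, 1, 1] : Fin 6 → ℝ) 2 = 0 := rfl
private lemma vv3 : (![0, 0, 0, 1, 1, 1] : Fin 6 → ℝ) 3 = 1 := rfl
private lemma vv4 : (![0, 0, 0, 1, 1, 1] : Fin 6 → ℝ) 4 = 1 := rfl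
private lemma vv5 : (![0, 0, 0, 1, 1, 1] : Fin 6 → ℝ) 5 = 1 := rfl

private lemma vmemC1 : (![0, 0, 0, 1, 1, 1] : Fin 6 → ℝ) ∈ upgmaConeC1 := by
  refine ⟨fun i => ?_, by norm_num [upgmaConeC1, vv0, vv1, vv2, vv3, vv4, vv5]⟩
  fin_cases i <;> norm_num

private lemma vmemC2 : (![0, 0, 0, 1, 1, 1] : Fin 6 → ℝ) ∈ upgmaConeC2 := by
  refine ⟨fun i => ?_, by norm_num [upgmaConeC2, vv0, vv1, vv2, vv3, vv4, vv5]⟩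
  fin_cases i <;> norm_num

private lemma vne : (![0, 0, 0, 1, 1, 1] : Fin 6 → ℝ) ≠ 0 := by
  intro h
  have := congrFun h 3
  rw [vv3] at this
  simp at this

private lemma smulC1 {d : Fin 6 → ℝ} {c : ℝ} (hd : d ∈ upgmaConeC1) (hc : 0 ≤ c) :
    c • d ∈ upgmaConeC1 := by
  obtain ⟨h0, h1, h2, h3, h4, h5, h6, h7⟩ := hd
  refine ⟨fun i => mul_nonneg hc (h0 i), ?_, ?_, ?_, ?_, ?_, ?_, ?_⟩ <;>
    simp only [Pi.smul_apply, smul_eq_mul] <;> nlinarith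

private lemma smulC2 {d : Fin 6 → ℝ} {c : ℝ} (hd : d ∈ upgmaConeC2) (hc : 0 ≤ c) :
    c • d ∈ upgmaConeC2 := by
  obtain ⟨h0, h1, h2, h3, h4, h5, h6, h7⟩ := hd
  refine ⟨fun i => mul_nonneg hc (h0 i), ?_, ?_, ?_, ?_, ?_, ?_, ?_⟩ <;>
    simp only [Pi.smul_apply, smul_eq_mul] <;> nlinarith

/-- v is an extreme ray of the intersection. -/
private lemma ray_inter :
    IsExtremeRay (upgmaConeC1 ∩ upgmaConeC2) (![0, 0, 0, 1, 1, 1] : Fin 6 → ℝ) := by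
  refine ⟨⟨vmemC1, vmemC2⟩, vne, ?_⟩
  rintro x ⟨⟨hx0, _, _, _, _, _, hx6, _⟩, ⟨_, _, _, _, _, _, hx6', hx7'⟩⟩
    y ⟨⟨hy0, _, _, _, _, _, hy6, _⟩, ⟨_, _, _, _, _, _, hy6', hy7'⟩⟩ hxy
  have e0 := congrFun hxy 0; have e1 := congrFun hxy 1; have e2 := congrFun hxy 2
  have e3 := congrFun hxy 3; have e4 := congrFun hxy 4; have e5 := congrFun hxy 5
  simp only [Pi.add_apply, vv0, vv1, vv2, vv3, vv4, vv5] at e0 e1 e2 e3 e4 e5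
  have hx00 : x 0 = 0 := le_antisymm (by have := hy0 0; linarith) (hx0 0)
  have hy00 : y 0 = 0 := by linarith
  have hx01 : x 1 = 0 := le_antisymm (by have := hy0 1; linarith) (hx0 1)
  have hy01 : y 1 = 0 := by linarith
  have hx02 : x 2 = 0 := le_antisymm (by have := hy0 2; linarith) (hx0 2)
  have hy02 : y 2 = 0 := by linarith
  -- from C1: x3 ≤ x4 ; from C2: x3 ≤ x5
  have hx34 : x 3 ≤ x 4 := by rw [hx01, hx02] at hx6; linarith
  have hy34 : y 3 ≤ y 4 := by rw [hy01, hy02] at hy6; linarith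
  have hx35 : x 3 ≤ x 5 := by rw [hx00, hx02] at hx6'; linarith
  have hy35 : y 3 ≤ y 5 := by rw [hy00, hy02] at hy6'; linarith
  have hx4 : x 4 = x 3 := by linarith
  have hx5 : x 5 = x 3 := by linarith
  have hy4 : y 4 = y 3 := by linarith
  have hy5 : y 5 = y 3 := by linarith
  exact ⟨⟨x 3, hx0 3, eqsmul x hx00 hx01 hx02 hx4 hx5⟩,
    ⟨y 3, hy0 3, eqsmul y hy00 hy01 hy02 hy4 hy5⟩⟩

private lemma not_ray_C1 :
    ¬ IsExtremeRay upgmaConeC1 (![0, 0, 0, 1, 1, 1] : Fin 6 → ℝ) := by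
  rintro ⟨-, -, h⟩
  have hx : (![0, 0, 0, 1, 1, 1/2] : Fin 6 → ℝ) ∈ upgmaConeC1 := by
    refine ⟨fun i => ?_, by norm_num [upgmaConeC1, ev2, ev3, ev4, ev5]⟩
    fin_cases i <;> norm_num
  have hy : (![0, 0, 0, 0, 0, 1/2] : Fin 6 → ℝ) ∈ upgmaConeC1 := by
    refine ⟨fun i => ?_, by norm_num [upgmaConeC1, ev2, ev3, ev4, ev5]⟩
    fin_cases i <;> norm_num
  have hsum : (![0, 0, 0, 1, 1, 1/2] : Fin 6 → ℝ) + ![0, 0, 0, 0, 0, 1/2]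
      = ![0, 0, 0, 1, 1, 1] := by
    funext i; fin_cases i <;> norm_num
  obtain ⟨⟨a, -, ha⟩, -⟩ := h _ hx _ hy hsum
  have h3 := congrFun ha 3
  have h5 := congrFun ha 5
  simp only [Pi.smul_apply, smul_eq_mul, vv3, vv5, mul_one] at h3 h5
  norm_num [show (![0, 0, 0, 1, 1, 1/2] : Fin 6 → ℝ) 3 = 1 from rfl] at h3
  norm_num [show (![0, 0, 0, 1, 1, 1/2] : Fin 6 → ℝ) 5 = 1/2 from rfl] at h5
  linarith

private lemma not_ray_C2 :
    ¬ IsExtremeRay upgmaConeC2 (![0, 0, 0, 1, 1, 1] : Fin 6 → ℝ) := by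
  rintro ⟨-, -, h⟩
  have hx : (![0, 0, 0, 1, 1/2, 1] : Fin 6 → ℝ) ∈ upgmaConeC2 := by
    refine ⟨fun i => ?_, by norm_num [upgmaConeC2, ev2, ev3, ev4, ev5]⟩
    fin_cases i <;> norm_num
  have hy : (![0, 0, 0, 0, 1/2, 0] : Fin 6 → ℝ) ∈ upgmaConeC2 := by
    refine ⟨fun i => ?_, by norm_num [upgmaConeC2, ev2, ev3, ev4, ev5]⟩
    fin_cases i <;> norm_num
  have hsum : (![0, 0, 0, 1, 1/2, 1] : Fin 6 → ℝ) + ![0, 0, 0, 0, 1/2, 0]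
      = ![0, 0, 0, 1, 1, 1] := by
    funext i; fin_cases i <;> norm_num
  obtain ⟨⟨a, -, ha⟩, -⟩ := h _ hx _ hy hsum
  have h3 := congrFun ha 3
  have h4 := congrFun ha 4
  simp only [Pi.smul_apply, smul_eq_mul, vv3, vv4, mul_one] at h3 h4
  norm_num [show (![0, 0, 0, 1, 1/2, 1] : Fin 6 → ℝ) 3 = 1 from rfl] at h3
  norm_num [show (![0, 0, 0, 1, 1/2, 1] : Fin 6 → ℝ) 4 = 1/2 from rfl] at h4
  linarith

/-- The UPGMA cones do not form a fan: the vector `(0,0,0,1,1,1)` spans an extreme ray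
of `P(C₁) ∩ P(C₂)` but is not an extreme ray of `P(C₁)` or of `P(C₂)`; hence
`P(C₁) ∩ P(C₂)` is not a common face (extreme subset) of the two cones. -/
theorem stmt15 :
    IsExtremeRay (upgmaConeC1 ∩ upgmaConeC2) (![0, 0, 0, 1, 1, 1] : Fin 6 → ℝ) ∧
    ¬ IsExtremeRay upgmaConeC1 (![0, 0, 0, 1, 1, 1] : Fin 6 → ℝ) ∧
    ¬ IsExtremeRay upgmaConeC2 (![0, 0, 0, 1, 1, 1] : Fin 6 → ℝ) ∧
    ¬ (IsExtreme ℝ upgmaConeC1 (upgmaConeC1 ∩ upgmaConeC2) ∧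
        IsExtreme ℝ upgmaConeC2 (upgmaConeC1 ∩ upgmaConeC2)) := by
  refine ⟨ray_inter, not_ray_C1, not_ray_C2, ?_⟩
  rintro ⟨⟨-, hE⟩, -⟩
  apply not_ray_C1
  refine ⟨vmemC1, vne, ?_⟩
  intro x hx y hy hxy
  -- 2x and 2y lie in C1, and v is the midpoint of 2x and 2y
  have h2x : (2 : ℝ) • x ∈ upgmaConeC1 := smulC1 hx (by norm_num)
  have h2y : (2 : ℝ) • y ∈ upgmaConeC1 := smulC1 hy (by norm_num)
  have hmid : (![0, 0, 0, 1, 1, 1] : Fin 6 → ℝ) ∈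
      openSegment ℝ ((2 : ℝ) • x) ((2 : ℝ) • y) := by
    refine ⟨1/2, 1/2, by norm_num, by norm_num, by norm_num, ?_⟩
    rw [smul_smul, smul_smul, ← hxy]
    module
  have hmem := hE h2x h2y ⟨vmemC1, vmemC2⟩ hmid
  have hx' : x ∈ upgmaConeC1 ∩ upgmaConeC2 := by
    have := ray_inter
    have hxin : x = (1/2 : ℝ) • ((2:ℝ) • x) := by rw [smul_smul]; norm_num
    rw [hxin]
    exact ⟨smulC1 hmem.1 (by norm_num), smulC2 hmem.2 (by norm_num)⟩
  have hy' : y ∈ upgmaConeC1 ∩ upgmaConeC2 := by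
    have hyin : y = (1/2 : ℝ) • ((2:ℝ) • y) := by rw [smul_smul]; norm_num
    rw [hyin]
    have hmem := hE h2y h2x ⟨vmemC1, vmemC2⟩ (by rw [openSegment_symm]; exact hmid)
    exact ⟨smulC1 hmem.1 (by norm_num), smulC2 hmem.2 (by norm_num)⟩
  exact ray_inter.2.2 x hx' y hy' hxy
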